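/- arXiv:2503.00896 — 2 statements merged into one kernel-verified Lean document; each statement's English description precedes it below -/
import Mathlib

section
/- The largest size of a (t, t+1)-core partition with distinct parts is floor((1/3) * C(t+1, 2)), where C(t+1,2) = t(t+1)/2. -/
set_option maxHeartbeats 1000000


/-- An integer partition, given by its (weakly decreasing, eventually zero)
sequence of parts, indexed from `0`. -/
structure IntPartition where
  parts : ℕ → ℕ
  antitone : ∀ i j, i ≤ j → parts j ≤ parts i
  finite : ∃ N, ∀ i, N ≤ i → parts i = 0

namespace IntPartition

/-- The size of a partition: the sum of its parts. -/
noncomputable def size (lam : IntPartition) : ℕ := ∑ᶠ i, lam.parts i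

/-- The parts of the conjugate partition: `conjParts lam j` is the number of
rows `i` with `lam.parts i > j` (rows and columns are `0`-indexed). -/
noncomputable def conjParts (lam : IntPartition) (j : ℕ) : ℕ :=
  Nat.card {i : ℕ | j < lam.parts i}

/-- A partition is self-conjugate if it equals its conjugate. -/
def IsSelfConjugate (lam : IntPartition) : Prop :=
  ∀ j, lam.conjParts j = lam.parts j

/-- `(i, j)` (both `0`-indexed) is a cell of the Young diagram of `lam`. -/
def IsCell (lam : IntPartition) (i j : ℕ) : Prop := j < lam.parts i

/-- The hook length of the cell `(i, j)` (both `0`-indexed): the number of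
cells directly to the right, plus the number directly below, plus one. -/
noncomputable def hook (lam : IntPartition) (i j : ℕ) : ℕ :=
  (lam.parts i - j) + (lam.conjParts j - i) - 1

/-- A partition is a `t`-core if no hook length is divisible by `t`. -/
def IsCore (lam : IntPartition) (t : ℕ) : Prop :=
  ∀ i j, lam.IsCell i j → ¬ (t ∣ lam.hook i j)

/-- The size of the Durfee square: the largest `k` such that the partition has
at least `k` parts of size at least `k`. -/
noncomputable def durfee (lam : IntPartition) : ℕ :=
  Nat.card {i : ℕ | i < lam.parts i}

/-- A partition has distinct parts if its (nonzero) parts are pairwise different. -/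
def DistinctParts (lam : IntPartition) : Prop :=
  ∀ i j, lam.parts i ≠ 0 → lam.parts j ≠ 0 → i ≠ j → lam.parts i ≠ lam.parts j

/-- The set of main diagonal hook lengths of `lam`. -/
noncomputable def MD (lam : IntPartition) : Set ℕ :=
  {h | ∃ i < lam.durfee, lam.hook i i = h}

/-- `lam ∈ DS(t)`: `lam` is a self-conjugate `(t, t+1)`-core partition whose
first `durfee lam` parts are pairwise distinct. -/
def InDS (lam : IntPartition) (t : ℕ) : Prop :=
  lam.IsSelfConjugate ∧ lam.IsCore t ∧ lam.IsCore (t + 1) ∧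
    ∀ i j, i < lam.durfee → j < lam.durfee → i ≠ j → lam.parts i ≠ lam.parts j

end IntPartition

namespace IntPartition

lemma ncard_Iio (n : ℕ) : (Set.Iio n).ncard = n := by
  rw [← Finset.coe_range, Set.ncard_coe_finset, Finset.card_range]

lemma lt_conj_iff (lam : IntPartition) (i j : ℕ) :
    i < lam.conjParts j ↔ j < lam.parts i := by
  obtain ⟨N, hN⟩ := lam.finite
  have hfin : {i : ℕ | j < lam.parts i}.Finite := by
    apply (Set.finite_Iio N).subset
    intro x hx
    simp only [Set.mem_setOf_eq] at hx
    simp only [Set.mem_Iio]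
    by_contra h
    push_neg at h
    rw [hN x h] at hx
    omega
  rw [conjParts, Nat.card_coe_set_eq]
  constructor
  · intro h
    by_contra hpj
    push_neg at hpj
    have hsub : {i' : ℕ | j < lam.parts i'} ⊆ Set.Iio i := by
      intro x hx
      simp only [Set.mem_setOf_eq] at hx
      simp only [Set.mem_Iio]
      by_contra hxi
      push_neg at hxi
      have := lam.antitone i x hxi
      omega
    have := Set.ncard_le_ncard hsub (Set.finite_Iio i)
    rw [ncard_Iio] at this
    omega
  · intro h
    have hsub : Set.Iio (i + 1) ⊆ {i' : ℕ | j < lam.parts i'} := by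
      intro x hx
      simp only [Set.mem_Iio] at hx
      simp only [Set.mem_setOf_eq]
      have := lam.antitone x i (by omega)
      omega
    have := Set.ncard_le_ncard hsub hfin
    rw [ncard_Iio] at this
    omega

lemma conj_anti (lam : IntPartition) {j j' : ℕ} (h : j ≤ j') :
    lam.conjParts j' ≤ lam.conjParts j := by
  by_contra hc
  push_neg at hc
  have h1 := (lam.lt_conj_iff (lam.conjParts j) j').1 hc
  have h2 := (lam.lt_conj_iff (lam.conjParts j) j).2 (by omega)
  omega

lemma hook_pos (lam : IntPartition) {i j : ℕ} (h : lam.IsCell i j) : 1 ≤ lam.hook i j := by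
  have h1 : j < lam.parts i := h
  have h2 : i < lam.conjParts j := (lam.lt_conj_iff i j).2 h1
  rw [hook]
  omega

lemma hook_le (lam : IntPartition) {i j : ℕ} (h : lam.IsCell i j) :
    lam.hook i j ≤ lam.parts 0 + lam.conjParts 0 - 1 := by
  have h1 : j < lam.parts i := h
  have hp : lam.parts i ≤ lam.parts 0 := lam.antitone 0 i (Nat.zero_le i)
  have hc : lam.conjParts j ≤ lam.conjParts 0 := lam.conj_anti (Nat.zero_le j)
  rw [hook]
  omega

lemma isCore_of_bound (lam : IntPartition) {s : ℕ}
    (h : lam.parts 0 + lam.conjParts 0 ≤ s) : lam.IsCore s := by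
  intro i j hc hdvd
  have h1 := lam.hook_pos hc
  have h2 := lam.hook_le hc
  have h3 := Nat.le_of_dvd (by omega) hdvd
  have h4 : 0 < lam.parts i := by
    have : j < lam.parts i := hc
    omega
  have h5 : 0 < lam.parts 0 := by
    have := lam.antitone 0 i (Nat.zero_le i)
    omega
  have h6 : 0 < lam.conjParts 0 := (lam.lt_conj_iff 0 0).2 h5
  omega

lemma size_eq_sum (lam : IntPartition) {m : ℕ} (h : ∀ i, m ≤ i → lam.parts i = 0) :
    lam.size = ∑ i ∈ Finset.range m, lam.parts i := by
  rw [size]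
  apply finsum_eq_sum_of_support_subset
  intro x hx
  simp only [Function.mem_support] at hx
  simp only [Finset.coe_range, Set.mem_Iio]
  by_contra hxm
  push_neg at hxm
  exact hx (h x hxm)

lemma conj_step (lam : IntPartition) (hd : lam.DistinctParts) (j : ℕ) :
    lam.conjParts j ≤ lam.conjParts (j + 1) + 1 := by
  by_contra hc
  push_neg at hc
  set a := lam.conjParts (j + 1) with ha
  have h1 : j < lam.parts a := (lam.lt_conj_iff a j).1 (by omega)
  have h2 : j < lam.parts (a + 1) := (lam.lt_conj_iff (a + 1) j).1 (by omega)
  have h3 : ¬ (j + 1 < lam.parts a) := by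
    intro h
    have := (lam.lt_conj_iff a (j + 1)).2 h
    omega
  have h4 : ¬ (j + 1 < lam.parts (a + 1)) := by
    intro h
    have := (lam.lt_conj_iff (a + 1) (j + 1)).2 h
    omega
  exact hd a (a + 1) (by omega) (by omega) (by omega) (by omega)

end IntPartition

/-- Sum of a descending staircase. -/
lemma sum_desc (a : ℕ) : ∀ n : ℕ, n ≤ a →
    2 * ∑ i ∈ Finset.range n, (a - i) = n * (2 * a + 1 - n) := by
  intro n
  induction n with
  | zero => simp
  | succ n ih =>
    intro hn
    rw [Finset.sum_range_succ, Nat.mul_add, ih (by omega)]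
    have h1 : 2 * a + 1 - n = (2 * a - n) + 1 := by omega
    have h2 : 2 * a + 1 - (n + 1) = 2 * a - n := by omega
    rw [h1, h2]
    have h3 : 2 * (a - n) = 2 * a - n - n := by omega
    rw [h3]
    have h4 : n ≤ 2 * a - n := by omega
    set b := 2 * a - n
    rw [Nat.mul_succ, Nat.succ_mul]
    omega

/-- The staircase partition used for the lower bound. -/
noncomputable def stair (t : ℕ) : IntPartition where
  parts i := if i < (t + 1) / 3 then t - (t + 1) / 3 - i else 0
  antitone := by
    intro i j hij
    split <;> split <;> omega
  finite := ⟨(t + 1) / 3, by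
    intro i hi
    rw [if_neg (by omega)]⟩

lemma stair_parts (t i : ℕ) :
    (stair t).parts i = if i < (t + 1) / 3 then t - (t + 1) / 3 - i else 0 := rfl

/-- The largest size of a `(t, t+1)`-core partition with distinct parts is
`⌊(1/3) * C(t+1, 2)⌋`. -/
theorem largest_size_core_distinct (t : ℕ) (ht : 1 ≤ t) :
    IsGreatest {n : ℕ | ∃ lam : IntPartition,
        lam.IsCore t ∧ lam.IsCore (t + 1) ∧ lam.DistinctParts ∧ lam.size = n}
      ((t + 1).choose 2 / 3) := by
  have hchoose : (t + 1).choose 2 = (t + 1) * t / 2 := by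
    rw [Nat.choose_two_right]
    simp
  constructor
  · -- membership: the staircase partition achieves the bound
    set m := (t + 1) / 3 with hm
    have hm2 : 2 * m ≤ t := by omega
    have hposiff : ∀ i, 0 < (stair t).parts i ↔ i < m := by
      intro i
      rw [stair_parts]
      split <;> omega
    have hconj0 : (stair t).conjParts 0 = m := by
      rw [IntPartition.conjParts]
      have hset : {i : ℕ | 0 < (stair t).parts i} = Set.Iio m := by
        ext i
        simp only [Set.mem_setOf_eq, Set.mem_Iio]
        exact hposiff i
      rw [hset, Nat.card_coe_set_eq, IntPartition.ncard_Iio]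
    have hp0 : (stair t).parts 0 ≤ t - m := by
      rw [stair_parts]
      split <;> omega
    have hcoret : (stair t).IsCore t :=
      (stair t).isCore_of_bound (by omega)
    have hcoret1 : (stair t).IsCore (t + 1) :=
      (stair t).isCore_of_bound (by omega)
    have hdist : (stair t).DistinctParts := by
      intro i j hi hj hne
      have hi' : i < m := (hposiff i).1 (Nat.pos_of_ne_zero hi)
      have hj' : j < m := (hposiff j).1 (Nat.pos_of_ne_zero hj)
      rw [stair_parts, stair_parts, if_pos (hm ▸ hi'), if_pos (hm ▸ hj')]
      omega
    have hsize : 2 * (stair t).size = m * (2 * (t - m) + 1 - m) := by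
      rw [(stair t).size_eq_sum (m := m) (fun i hi => by rw [stair_parts, if_neg (by omega)])]
      have : ∀ i ∈ Finset.range m, (stair t).parts i = (t - m) - i := by
        intro i hi
        simp only [Finset.mem_range] at hi
        rw [stair_parts, if_pos hi]
      rw [Finset.sum_congr rfl this, sum_desc (t - m) m (by omega)]
    refine ⟨stair t, hcoret, hcoret1, hdist, ?_⟩
    rw [hchoose]
    have h3 : t % 3 = 0 ∨ t % 3 = 1 ∨ t % 3 = 2 := by omega
    rcases h3 with h3 | h3 | h3
    · have h3m : 3 * m = t := by omega
      have e1 : 2 * (t - m) + 1 - m = 3 * m + 1 := by omega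
      rw [e1] at hsize
      have hr : (t + 1) * t = 3 * (m * (3 * m + 1)) := by
        rw [← h3m]; ring
      have hP : (t + 1) * t = 6 * (stair t).size := by linarith
      rw [hP]
      omega
    · have h3m : t = 3 * m + 1 := by omega
      have e1 : 2 * (t - m) + 1 - m = 3 * m + 3 := by omega
      rw [e1] at hsize
      have hr : (t + 1) * t = 3 * (m * (3 * m + 3)) + 2 := by
        rw [h3m]; ring
      have hP : (t + 1) * t = 6 * (stair t).size + 2 := by linarith
      rw [hP]
      omega
    · have h3m : t + 1 = 3 * m := by omega
      have e1 : 2 * (t - m) + 1 - m = t := by omega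
      rw [e1] at hsize
      have hr : (t + 1) * t = 3 * (m * t) := by
        rw [h3m]; ring
      have hP : (t + 1) * t = 6 * (stair t).size := by linarith
      rw [hP]
      omega
  · -- upper bound
    rintro n ⟨lam, hcoret, hcoret1, hdist, rfl⟩
    set m := lam.conjParts 0 with hm
    have hzero : ∀ i, m ≤ i → lam.parts i = 0 := by
      intro i hi
      by_contra h
      have := (lam.lt_conj_iff i 0).2 (by omega)
      omega
    rcases Nat.eq_zero_or_pos m with hm0 | hm1
    · rw [lam.size_eq_sum (m := m) hzero, hm0]
      simp
    -- now m ≥ 1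
    have hp0pos : 0 < lam.parts 0 := (lam.lt_conj_iff 0 0).1 hm1
    set p0 := lam.parts 0 with hp0
    -- key bound: p0 + m ≤ t
    have hcell00 : lam.IsCell 0 0 := hp0pos
    have hook_row : ∀ j, lam.hook 0 j = (p0 - j) + lam.conjParts j - 1 := by
      intro j
      rw [IntPartition.hook]
      omega
    have hconjlast : lam.conjParts (p0 - 1) = 1 := by
      have h1 : 0 < lam.conjParts (p0 - 1) :=
        (lam.lt_conj_iff 0 (p0 - 1)).2 (by omega)
      by_contra hc
      have h2 : 1 < lam.conjParts (p0 - 1) := by omega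
      have h3 : p0 - 1 < lam.parts 1 := (lam.lt_conj_iff 1 (p0 - 1)).1 h2
      have h4 : lam.parts 1 ≤ p0 := lam.antitone 0 1 (by omega)
      exact hdist 0 1 (by omega) (by omega) (by omega) (by omega)
    have hlast : lam.hook 0 (p0 - 1) = 1 := by
      rw [hook_row, hconjlast]
      omega
    have hstep : ∀ j, j + 1 < p0 → lam.hook 0 j ≤ lam.hook 0 (j + 1) + 2 := by
      intro j hj
      have h1 := lam.conj_step hdist j
      have h2 : 0 < lam.conjParts (j + 1) := (lam.lt_conj_iff 0 (j + 1)).2 (by omega)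
      rw [hook_row, hook_row]
      omega
    have key : ∀ n : ℕ, n < p0 → t + 1 ≤ lam.hook 0 (p0 - 1 - n) →
        ∃ j, j < p0 ∧ (lam.hook 0 j = t ∨ lam.hook 0 j = t + 1) := by
      intro n
      induction n with
      | zero =>
        intro _ h
        simp only [Nat.sub_zero] at h
        rw [hlast] at h
        omega
      | succ n ih =>
        intro hn h
        set j := p0 - 1 - (n + 1) with hj
        have hj1 : j + 1 = p0 - 1 - n := by omega
        have hjlt : j + 1 < p0 := by omega
        have hs := hstep j hjlt
        by_cases hc : t + 1 ≤ lam.hook 0 (j + 1)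
        · rw [hj1] at hc
          exact ih (by omega) hc
        · push_neg at hc
          by_cases h1 : lam.hook 0 (j + 1) = t
          · exact ⟨j + 1, by omega, Or.inl h1⟩
          · exact ⟨j, by omega, Or.inr (by omega)⟩
    have hH : lam.hook 0 0 = p0 + m - 1 := by
      rw [hook_row]
      omega
    have hpm : p0 + m ≤ t := by
      by_contra hc
      push_neg at hc
      have hge : t ≤ lam.hook 0 0 := by omega
      rcases Nat.eq_or_lt_of_le hge with heq | hlt
      · exact hcoret 0 0 hcell00 (heq ▸ dvd_refl t)
      · obtain ⟨j, hjp, hj⟩ := key (p0 - 1) (by omega) (by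
          have : p0 - 1 - (p0 - 1) = 0 := by omega
          rw [this]; omega)
        have hcellj : lam.IsCell 0 j := hjp
        rcases hj with hj | hj
        · exact hcoret 0 j hcellj (hj ▸ dvd_refl t)
        · exact hcoret1 0 j hcellj (hj ▸ dvd_refl (t + 1))
    -- strictly decreasing parts
    have hstrict : ∀ i, i + 1 < m → lam.parts (i + 1) < lam.parts i := by
      intro i hi
      have h1 : 0 < lam.parts (i + 1) := (lam.lt_conj_iff (i + 1) 0).1 (by omega)
      have h2 : 0 < lam.parts i := (lam.lt_conj_iff i 0).1 (by omega)
      have h3 := lam.antitone i (i + 1) (by omega)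
      have h4 := hdist i (i + 1) (by omega) (by omega) (by omega)
      omega
    have hbound : ∀ i, i < m → lam.parts i + i ≤ p0 := by
      intro i
      induction i with
      | zero => intro _; omega
      | succ i ih =>
        intro hi
        have := ih (by omega)
        have := hstrict i hi
        omega
    have hmp : m ≤ p0 := by
      have h1 : 0 < lam.parts (m - 1) := (lam.lt_conj_iff (m - 1) 0).1 (by omega)
      have := hbound (m - 1) (by omega)
      omega
    -- sum bound
    have hsum : lam.size = ∑ i ∈ Finset.range m, lam.parts i := lam.size_eq_sum hzero
    have hle : ∑ i ∈ Finset.range m, lam.parts i ≤ ∑ i ∈ Finset.range m, (p0 - i) := by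
      apply Finset.sum_le_sum
      intro i hi
      simp only [Finset.mem_range] at hi
      have := hbound i hi
      omega
    have hdesc := sum_desc p0 m hmp
    have h2n : 2 * lam.size ≤ m * (2 * p0 + 1 - m) := by
      rw [hsum]
      omega
    -- arithmetic finish
    have h6 : 6 * lam.size ≤ (t + 1) * t := by
      have hq : m + (2 * p0 + 1 - m) = 2 * p0 + 1 := by omega
      set q := 2 * p0 + 1 - m with hqdef
      have hZ2 : (2 : ℤ) * lam.size ≤ (m : ℤ) * q := by exact_mod_cast h2n
      have hZq : (m : ℤ) + q = 2 * p0 + 1 := by exact_mod_cast hq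
      have hZpm : (p0 : ℤ) + m ≤ t := by exact_mod_cast hpm
      have hZm : (1 : ℤ) ≤ m := by exact_mod_cast hm1
      have hcons : (0 : ℤ) ≤ ((t : ℤ) - 3 * m) * ((t : ℤ) - 3 * m + 1) := by
        rcases le_or_gt 0 ((t : ℤ) - 3 * m) with h | h
        · exact mul_nonneg h (by omega)
        · nlinarith [mul_nonneg (by omega : (0:ℤ) ≤ 3*(m:ℤ) - t) (by omega : (0:ℤ) ≤ 3*(m:ℤ) - t - 1)]
      have hx : (0 : ℤ) ≤ (m : ℤ) * ((t : ℤ) - (m : ℤ) - (p0 : ℤ)) :=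
        mul_nonneg (by omega) (by omega)
      have hZ6 : 6 * (lam.size : ℤ) ≤ ((t : ℤ) + 1) * t := by
        nlinarith [hcons, hx, hZ2, hZq]
      exact_mod_cast hZ6
    rw [hchoose]
    obtain ⟨P, hP⟩ : ∃ P, (t + 1) * t = P := ⟨_, rfl⟩
    rw [hP] at h6 ⊢
    omega
end

section
/- A self-conjugate partition λ is a t-core if and only if: (i) for every main diagonal hook length h of λ with h > 2t, h − 2t is also a main diagonal hook length of λ; and (ii) no two main diagonal hook lengths h1, h2 of λ satisfy h1 + h2 ≡ 0 (mod 2t). -/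
set_option linter.unusedSectionVars false
set_option linter.unusedVariables false


lemma lower_finset_eq_range (F : Finset ℕ) (h : ∀ a b, a ≤ b → b ∈ F → a ∈ F) :
    F = Finset.range F.card := by
  have hsub : F ⊆ Finset.range F.card := by
    intro x hx
    have hss : Finset.range (x + 1) ⊆ F := by
      intro a ha
      have := Finset.mem_range.mp ha
      exact h a x (by omega) hx
    have hc := Finset.card_le_card hss
    rw [Finset.card_range] at hc
    exact Finset.mem_range.mpr (by omega)
  exact Finset.eq_of_subset_of_card_le hsub (by simp)

lemma lower_set_lt_card (S : Set ℕ) (hfin : S.Finite)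
    (h : ∀ a b, a ≤ b → b ∈ S → a ∈ S) (x : ℕ) : x ∈ S ↔ x < Nat.card S := by
  have hcard : Nat.card S = hfin.toFinset.card := by
    rw [Nat.card_coe_set_eq, Set.ncard_eq_toFinset_card _ hfin]
  have hF : hfin.toFinset = Finset.range hfin.toFinset.card :=
    lower_finset_eq_range _ (fun a b hab hb => by
      rw [Set.Finite.mem_toFinset] at *
      exact h a b hab hb)
  rw [hcard, ← Set.Finite.mem_toFinset hfin]
  conv_lhs => rw [hF]
  exact Finset.mem_range

namespace IntPartition
variable (lam : IntPartition)

lemma lt_conjParts_iff (j r : ℕ) : r < lam.conjParts j ↔ j < lam.parts r := by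
  obtain ⟨N, hN⟩ := lam.finite
  have hfin : {i : ℕ | j < lam.parts i}.Finite := by
    apply (Set.finite_Iio N).subset
    intro i hi
    simp only [Set.mem_setOf_eq] at hi
    simp only [Set.mem_Iio]
    by_contra hc
    have := hN i (by omega)
    omega
  have hlow : ∀ a b, a ≤ b → b ∈ {i : ℕ | j < lam.parts i} → a ∈ {i : ℕ | j < lam.parts i} := by
    intro a b hab hb
    have := lam.antitone a b hab
    simp only [Set.mem_setOf_eq] at *
    omega
  exact (lower_set_lt_card _ hfin hlow r).symm

lemma lt_durfee_iff (i : ℕ) : i < lam.durfee ↔ i < lam.parts i := by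
  obtain ⟨N, hN⟩ := lam.finite
  have hfin : {i : ℕ | i < lam.parts i}.Finite := by
    apply (Set.finite_Iio N).subset
    intro i hi
    simp only [Set.mem_setOf_eq] at hi
    simp only [Set.mem_Iio]
    by_contra hc
    have := hN i (by omega)
    omega
  have hlow : ∀ a b, a ≤ b → b ∈ {i : ℕ | i < lam.parts i} → a ∈ {i : ℕ | i < lam.parts i} := by
    intro a b hab hb
    have := lam.antitone a b hab
    simp only [Set.mem_setOf_eq] at *
    omega
  exact (lower_set_lt_card _ hfin hlow i).symm

lemma durfee_le_parts {i : ℕ} (hi : i < lam.durfee) : lam.durfee ≤ lam.parts i := by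
  have hd : lam.durfee - 1 < lam.parts (lam.durfee - 1) :=
    (lam.lt_durfee_iff _).mp (by omega)
  have := lam.antitone i (lam.durfee - 1) (by omega)
  omega

lemma conjParts_le_durfee {j : ℕ} (hj : lam.durfee ≤ j) : lam.conjParts j ≤ lam.durfee := by
  by_contra hc
  have h1 : lam.durfee < lam.conjParts j := by omega
  rw [lt_conjParts_iff] at h1
  have h2 : lam.durfee < lam.parts lam.durfee := by omega
  rw [← lt_durfee_iff] at h2
  omega

lemma conjParts_anti {j j' : ℕ} (h : j ≤ j') : lam.conjParts j' ≤ lam.conjParts j := by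
  by_contra hc
  have h1 : lam.conjParts j < lam.conjParts j' := by omega
  rw [lt_conjParts_iff] at h1
  have h2 : lam.conjParts j < lam.conjParts j := by
    rw [lt_conjParts_iff]; omega
  omega
end IntPartition

namespace IntPartition
variable {lam : IntPartition} (hsc : lam.IsSelfConjugate)
include hsc

lemma hook_diag {i : ℕ} (hi : i < lam.durfee) :
    lam.hook i i + 2 * i + 1 = 2 * lam.parts i := by
  have h1 : i < lam.parts i := (lam.lt_durfee_iff i).mp hi
  have h2 : lam.conjParts i = lam.parts i := hsc i
  rw [hook]
  omega

lemma diag_strict_anti {i i' : ℕ} (h : i < i') (hi' : i' < lam.durfee) :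
    lam.hook i' i' < lam.hook i i := by
  have h1 := hook_diag hsc (lt_trans h hi')
  have h2 := hook_diag hsc hi'
  have h3 := lam.antitone i i' (le_of_lt h)
  omega

lemma square_cell {i j : ℕ} (hi : i < lam.durfee) (hj : j < lam.durfee) :
    lam.IsCell i j ∧ 2 * lam.hook i j = lam.hook i i + lam.hook j j := by
  have hpi := lam.durfee_le_parts hi
  have hpj := lam.durfee_le_parts hj
  have hcell : lam.IsCell i j := by rw [IsCell]; omega
  refine ⟨hcell, ?_⟩
  have h1 := hook_diag hsc hi
  have h2 := hook_diag hsc hj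
  have h3 : lam.conjParts j = lam.parts j := hsc j
  have h4 : i < lam.parts i := (lam.lt_durfee_iff i).mp hi
  have h5 : j < lam.parts j := (lam.lt_durfee_iff j).mp hj
  rw [hook, h3]
  omega

lemma hook_symm {i j : ℕ} (hcell : lam.IsCell i j) :
    lam.IsCell j i ∧ lam.hook i j = lam.hook j i := by
  have h1 : i < lam.conjParts j := (lam.lt_conjParts_iff j i).mpr hcell
  have h2 : lam.conjParts j = lam.parts j := hsc j
  have h3 : lam.conjParts i = lam.parts i := hsc i
  have hcell' : lam.IsCell j i := by rw [IsCell]; omega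
  refine ⟨hcell', ?_⟩
  rw [hook, hook, h2, h3]
  have : j < lam.parts i := hcell
  omega

/-- Arm hook value identity (ℕ-safe). -/
lemma arm_hook {i j : ℕ} (_hi : i < lam.durfee) (hkj : lam.durfee ≤ j)
    (hcell : lam.IsCell i j) :
    lam.hook i j + j + i + 1 = lam.parts i + lam.conjParts j ∧
      i < lam.conjParts j ∧ lam.conjParts j ≤ lam.durfee := by
  have h1 : i < lam.conjParts j := (lam.lt_conjParts_iff j i).mpr hcell
  have h2 : j < lam.parts i := hcell
  have h3 := lam.conjParts_le_durfee hkj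
  rw [hook]
  omega

lemma arm_strict_anti {i j j' : ℕ} (hi : i < lam.durfee) (hkj : lam.durfee ≤ j)
    (hjj : j < j') (hcell' : lam.IsCell i j') :
    lam.hook i j' < lam.hook i j := by
  have hcell : lam.IsCell i j := by
    have : j' < lam.parts i := hcell'
    rw [IsCell]; omega
  obtain ⟨e1, e2, e3⟩ := arm_hook hsc hi hkj hcell
  obtain ⟨f1, f2, f3⟩ := arm_hook hsc hi (by omega) hcell'
  have := lam.conjParts_anti (le_of_lt hjj)
  omega

lemma arm_bounds {i j : ℕ} (hi : i < lam.durfee) (hkj : lam.durfee ≤ j)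
    (hcell : lam.IsCell i j) :
    1 ≤ lam.hook i j ∧ 2 * lam.hook i j < lam.hook i i := by
  obtain ⟨e1, e2, e3⟩ := arm_hook hsc hi hkj hcell
  have hd := hook_diag hsc hi
  have h2 : j < lam.parts i := hcell
  omega

/-- The key disjointness: arm hooks avoid the half-differences of diagonal hooks. -/
lemma arm_ne {i j r : ℕ} (hi : i < lam.durfee) (hkj : lam.durfee ≤ j)
    (hcell : lam.IsCell i j) (hir : i < r) (hr : r < lam.durfee) :
    lam.hook i i ≠ 2 * lam.hook i j + lam.hook r r := by
  obtain ⟨e1, e2, e3⟩ := arm_hook hsc hi hkj hcell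
  have hdi := hook_diag hsc hi
  have hdr := hook_diag hsc hr
  have hbr : r < lam.parts r := (lam.lt_durfee_iff r).mp hr
  have hmono := lam.antitone i r (le_of_lt hir)
  have h2 : j < lam.parts i := hcell
  by_cases hcase : r < lam.conjParts j
  · -- b_r > j
    have hbj : j < lam.parts r := (lam.lt_conjParts_iff j r).mp hcase
    omega
  · -- b_r ≤ j and conjParts j ≤ r
    have hbj : ¬ (j < lam.parts r) := fun hh => hcase ((lam.lt_conjParts_iff j r).mpr hh)
    omega

end IntPartition

namespace IntPartition
variable {lam : IntPartition} (hsc : lam.IsSelfConjugate)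
include hsc

lemma arm_ne_MD {i j : ℕ} (hi : i < lam.durfee) (hkj : lam.durfee ≤ j)
    (hcell : lam.IsCell i j) :
    ∀ h ∈ lam.MD, lam.hook i i ≠ 2 * lam.hook i j + h := by
  rintro h ⟨r, hr, rfl⟩
  rcases lt_trichotomy r i with hri | rfl | hir
  · have h1 := diag_strict_anti hsc hri hi
    have h2 := (arm_bounds hsc hi hkj hcell).1
    omega
  · have h2 := (arm_bounds hsc hi hkj hcell).1
    omega
  · exact arm_ne hsc hi hkj hcell hir hr

lemma arm_surj {i m : ℕ} (hi : i < lam.durfee) (hm1 : 1 ≤ m)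
    (hm2 : 2 * m < lam.hook i i)
    (hnot : ∀ h ∈ lam.MD, lam.hook i i ≠ 2 * m + h) :
    ∃ j, lam.durfee ≤ j ∧ j < lam.parts i ∧ lam.hook i j = m := by
  set k := lam.durfee with hk
  set b := lam.parts i with hb
  have hkb : k ≤ b := lam.durfee_le_parts hi
  have hib : i < b := (lam.lt_durfee_iff i).mp hi
  have hdi := hook_diag hsc hi
  set c := b - i - 1 with hc
  set F1 : Finset ℕ := (Finset.Ico k b).image (lam.hook i) with hF1
  set F2 : Finset ℕ := (Finset.Ioo i k).image (fun r => (b - i) - (lam.parts r - r)) with hF2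
  have hd_eq : ∀ r, i < r → r < k → lam.hook i i =
      2 * ((b - i) - (lam.parts r - r)) + lam.hook r r := by
    intro r h1 h2
    have hdr := hook_diag hsc h2
    have hrr : r < lam.parts r := (lam.lt_durfee_iff r).mp h2
    have hmono := lam.antitone i r (le_of_lt h1)
    omega
  have hF1sub : F1 ⊆ Finset.Icc 1 c := by
    intro x hx
    rw [hF1, Finset.mem_image] at hx
    obtain ⟨j, hj, rfl⟩ := hx
    rw [Finset.mem_Ico] at hj
    have hcell : lam.IsCell i j := by rw [IsCell]; omega
    have := arm_bounds hsc hi hj.1 hcell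
    rw [Finset.mem_Icc]
    omega
  have hF2sub : F2 ⊆ Finset.Icc 1 c := by
    intro x hx
    rw [hF2, Finset.mem_image] at hx
    obtain ⟨r, hr, rfl⟩ := hx
    rw [Finset.mem_Ioo] at hr
    have hrr : r < lam.parts r := (lam.lt_durfee_iff r).mp hr.2
    have hmono := lam.antitone i r (le_of_lt hr.1)
    rw [Finset.mem_Icc]
    omega
  have hcard1 : F1.card = b - k := by
    rw [hF1, Finset.card_image_of_injOn, Nat.card_Ico]
    intro j hj j' hj' hjj
    rw [Finset.coe_Ico, Set.mem_Ico] at hj hj'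
    by_contra hne
    rcases lt_or_gt_of_ne hne with h | h
    · have : lam.IsCell i j' := by rw [IsCell]; omega
      have := arm_strict_anti hsc hi hj.1 h this
      omega
    · have : lam.IsCell i j := by rw [IsCell]; omega
      have := arm_strict_anti hsc hi hj'.1 h this
      omega
  have hcard2 : F2.card = k - i - 1 := by
    rw [hF2, Finset.card_image_of_injOn, Nat.card_Ioo]
    intro r hr r' hr' hrr
    rw [Finset.coe_Ioo, Set.mem_Ioo] at hr hr'
    have h1 : r < lam.parts r := (lam.lt_durfee_iff r).mp hr.2
    have h2 : r' < lam.parts r' := (lam.lt_durfee_iff r').mp hr'.2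
    by_contra hne
    rcases lt_or_gt_of_ne hne with h | h
    · have := lam.antitone r r' (le_of_lt h)
      have := lam.antitone i r (le_of_lt hr.1)
      simp only at hrr
      omega
    · have := lam.antitone r' r (le_of_lt h)
      have := lam.antitone i r' (le_of_lt hr'.1)
      simp only at hrr
      omega
  have hdisj : Disjoint F1 F2 := by
    rw [Finset.disjoint_left]
    intro x hx1 hx2
    rw [hF1, Finset.mem_image] at hx1
    rw [hF2, Finset.mem_image] at hx2
    obtain ⟨j, hj, rfl⟩ := hx1
    obtain ⟨r, hr, hreq⟩ := hx2
    rw [Finset.mem_Ico] at hj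
    rw [Finset.mem_Ioo] at hr
    have hcell : lam.IsCell i j := by rw [IsCell]; omega
    have h1 := hd_eq r hr.1 hr.2
    rw [hreq] at h1
    exact arm_ne hsc hi hj.1 hcell hr.1 hr.2 h1
  have hunion : F1 ∪ F2 = Finset.Icc 1 c := by
    apply Finset.eq_of_subset_of_card_le
    · exact Finset.union_subset hF1sub hF2sub
    · rw [Finset.card_union_of_disjoint hdisj, hcard1, hcard2, Nat.card_Icc]
      omega
  have hm : m ∈ Finset.Icc 1 c := by rw [Finset.mem_Icc]; omega
  rw [← hunion, Finset.mem_union] at hm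
  rcases hm with hm | hm
  · rw [hF1, Finset.mem_image] at hm
    obtain ⟨j, hj, hje⟩ := hm
    rw [Finset.mem_Ico] at hj
    exact ⟨j, hj.1, hj.2, hje⟩
  · exfalso
    rw [hF2, Finset.mem_image] at hm
    obtain ⟨r, hr, hre⟩ := hm
    rw [Finset.mem_Ioo] at hr
    have h1 := hd_eq r hr.1 hr.2
    rw [hre] at h1
    exact hnot (lam.hook r r) ⟨r, hr.2, rfl⟩ h1

end IntPartition

namespace IntPartition
variable {lam : IntPartition}

lemma arm_not_dvd (hsc : lam.IsSelfConjugate) {t : ℕ} (ht : 1 ≤ t)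
    (H1 : ∀ h ∈ lam.MD, 2 * t < h → h - 2 * t ∈ lam.MD)
    {i j : ℕ} (hi : i < lam.durfee) (hkj : lam.durfee ≤ j)
    (hcell : lam.IsCell i j) : ¬ (t ∣ lam.hook i j) := by
  rintro ⟨s, hs⟩
  obtain ⟨hb1, hb2⟩ := arm_bounds hsc hi hkj hcell
  have hs1 : 1 ≤ s := by
    rcases Nat.eq_zero_or_pos s with rfl | h
    · omega
    · exact h
  have claim : ∀ s', 1 ≤ s' → 2 * (t * s') < lam.hook i i →
      lam.hook i i - 2 * (t * s') ∈ lam.MD := by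
    intro s' hs'
    induction s', hs' using Nat.le_induction with
    | base =>
      intro hlt
      have := H1 (lam.hook i i) ⟨i, hi, rfl⟩ (by omega)
      simpa [mul_one] using this
    | succ n hn ih =>
      intro hlt
      have hts : t * (n + 1) = t * n + t := by ring
      have hIH := ih (by omega)
      have hgt : 2 * t < lam.hook i i - 2 * (t * n) := by omega
      have := H1 _ hIH hgt
      have heq : lam.hook i i - 2 * (t * n) - 2 * t =
          lam.hook i i - 2 * (t * (n + 1)) := by omega
      rwa [heq] at this
  have hmem := claim s hs1 (by omega)
  have := arm_ne_MD hsc hi hkj hcell _ hmem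
  omega

theorem main_iff (t : ℕ) (ht : 1 ≤ t) (hsc : lam.IsSelfConjugate) :
    lam.IsCore t ↔
      ((∀ h ∈ lam.MD, 2 * t < h → h - 2 * t ∈ lam.MD) ∧
        ∀ h₁ ∈ lam.MD, ∀ h₂ ∈ lam.MD, ¬ (2 * t ∣ h₁ + h₂)) := by
  constructor
  · intro hcore
    constructor
    · rintro h ⟨i, hi, rfl⟩ hlt
      by_contra hnot
      obtain ⟨j, hkj, hjb, hje⟩ := arm_surj hsc hi ht (by omega) (by
        intro h hmem heq
        apply hnot
        have : lam.hook i i - 2 * t = h := by omega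
        rwa [this])
      exact hcore i j (by rw [IsCell]; omega) (hje ▸ dvd_refl t)
    · rintro h₁ ⟨i, hi, rfl⟩ h₂ ⟨j, hj, rfl⟩ ⟨u, hu⟩
      obtain ⟨hcell, heq⟩ := square_cell hsc hi hj
      apply hcore i j hcell
      refine ⟨u, ?_⟩
      have h2 : 2 * lam.hook i j = 2 * (t * u) := by rw [heq, hu]; ring
      omega
  · rintro ⟨H1, H2⟩ i j hcell hdvd
    set k := lam.durfee with hk
    by_cases hik : i < k
    · by_cases hjk : j < k
      · obtain ⟨_, heq⟩ := square_cell hsc hik hjk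
        obtain ⟨u, hu⟩ := hdvd
        refine H2 (lam.hook i i) ⟨i, hik, rfl⟩ (lam.hook j j) ⟨j, hjk, rfl⟩ ⟨u, ?_⟩
        rw [← heq, hu]; ring
      · exact arm_not_dvd hsc ht H1 hik (by omega) hcell hdvd
    · have hcj : j < k := by
        by_contra hjk
        have h1 : j < lam.parts i := hcell
        have h2 := lam.antitone k i (by omega)
        have h3 : ¬ (k < lam.parts k) := by
          rw [← lam.lt_durfee_iff]; omega
        omega
      obtain ⟨hcell', heq⟩ := hook_symm hsc hcell
      rw [heq] at hdvd
      exact arm_not_dvd hsc ht H1 hcj (by omega) hcell' hdvd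
end IntPartition


/-- Ford–Mai–Sze: a self-conjugate partition `lam` is a `t`-core if and only if
(i) for every main diagonal hook length `h > 2t`, `h - 2t` is also a main
diagonal hook length, and (ii) no two main diagonal hook lengths sum to a
multiple of `2t`. -/
theorem isCore_iff_of_selfConjugate (t : ℕ) (ht : 1 ≤ t)
    (lam : IntPartition) (hsc : lam.IsSelfConjugate) :
    lam.IsCore t ↔
      ((∀ h ∈ lam.MD, 2 * t < h → h - 2 * t ∈ lam.MD) ∧
        ∀ h₁ ∈ lam.MD, ∀ h₂ ∈ lam.MD, ¬ (2 * t ∣ h₁ + h₂)) :=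
  IntPartition.main_iff t ht hsc
end
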